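/- Let d ≥ 3 and k ≥ d−2 be integers. Then the Hilbert function of C[x,y]/(x^d, y^d, x^{d−1}y)^k in degree dk equals binomial(d−1, 2). -/

import Mathlib

open MvPolynomial Finsupp Pointwise


noncomputable abbrev mo (p q : ℕ) : MvPolynomial (Fin 2) ℂ :=
  monomial (Finsupp.single 0 p + Finsupp.single 1 q) 1

lemma degree_fin2 (u : Fin 2 →₀ ℕ) : u.degree = u 0 + u 1 := by
  rw [Finsupp.degree_apply, Finset.sum_subset (Finset.subset_univ u.support)
    (by intro x _ hx; simpa using Finsupp.notMem_support_iff.mp hx), Fin.sum_univ_two]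

lemma fin2_eq (u : Fin 2 →₀ ℕ) : u = Finsupp.single 0 (u 0) + Finsupp.single 1 (u 1) := by
  ext i
  fin_cases i <;> simp [Finsupp.single_apply]

lemma mo_mul (p q p' q' : ℕ) : mo p q * mo p' q' = mo (p + p') (q + q') := by
  rw [monomial_mul, mul_one]
  congr 1
  rw [Finsupp.single_add, Finsupp.single_add]
  abel

lemma X0_pow (n : ℕ) : (X 0 : MvPolynomial (Fin 2) ℂ) ^ n = mo n 0 := by
  rw [X_pow_eq_monomial]; simp

lemma X1_pow (n : ℕ) : (X 1 : MvPolynomial (Fin 2) ℂ) ^ n = mo 0 n := by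
  rw [X_pow_eq_monomial]; simp

lemma degree_single_add (p q : ℕ) :
    (Finsupp.single (0 : Fin 2) p + Finsupp.single 1 q).degree = p + q := by
  rw [degree_fin2]; simp [Finsupp.single_apply]

lemma mo_inj {p q p' q' : ℕ} (h : mo p q = mo p' q') : p = p' ∧ q = q' := by
  have := (monomial_eq_monomial_iff _ _ _ _).mp h
  rcases this with h | h
  · have h0 := congrArg (fun f => f 0) h.1
    have h1 := congrArg (fun f => f 1) h.1
    simp [Finsupp.single_apply] at h0 h1
    exact ⟨h0, h1⟩
  · simp at h



lemma fin2_le_eq {u v : Fin 2 →₀ ℕ} (h : u ≤ v) (hs : v.degree = u.degree) : v = u := by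
  have h0 : u 0 ≤ v 0 := h 0
  have h1 : u 1 ≤ v 1 := h 1
  have d0 : v 0 + v 1 = u 0 + u 1 := by rw [← degree_fin2, ← degree_fin2, hs]
  have e0 : v 0 = u 0 := by omega
  have e1 : v 1 = u 1 := by omega
  ext i
  fin_cases i
  · exact e0
  · exact e1

lemma hc_mul_monomial (n : ℕ) (u : Fin 2 →₀ ℕ) (hu : u.degree = n) (r : ℂ)
    (q : MvPolynomial (Fin 2) ℂ) :
    homogeneousComponent n (q * monomial u r) = coeff 0 q • monomial u r := by
  ext v
  rw [coeff_homogeneousComponent, coeff_mul_monomial', smul_eq_C_mul, coeff_C_mul,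
    coeff_monomial]
  by_cases hv : v.degree = n
  · by_cases huv : u ≤ v
    · have : v = u := fin2_le_eq huv (by rw [hv, hu])
      simp [this, hv, hu]
    · have : ¬ u = v := by rintro rfl; exact huv le_rfl
      simp [hv, huv, this]
  · by_cases huv2 : u = v
    · exact absurd (huv2 ▸ hu) hv
    · simp [hv, huv2]

lemma hc_mem_span (n : ℕ) (T : Set (MvPolynomial (Fin 2) ℂ))
    (hT : ∀ t ∈ T, ∃ u : Fin 2 →₀ ℕ, u.degree = n ∧ t = monomial u 1)
    {p : MvPolynomial (Fin 2) ℂ} (hp : p ∈ Ideal.span T) :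
    homogeneousComponent n p ∈ Submodule.span ℂ T := by
  rw [← Ideal.submodule_span_eq] at hp
  obtain ⟨c, hsupp, rfl⟩ := Submodule.mem_span_set.mp hp
  rw [map_finsuppSum]
  refine Submodule.sum_mem _ fun t ht => ?_
  obtain ⟨u, hu, rfl⟩ := hT t (hsupp ht)
  show homogeneousComponent n (c _ • monomial u 1) ∈ _
  rw [smul_eq_mul, hc_mul_monomial n u hu 1 (c _)]
  exact Submodule.smul_mem _ _ (Submodule.subset_span (hsupp ht))
lemma homogSubmodule_eq_span (n : ℕ) :
    homogeneousSubmodule (Fin 2) ℂ n =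
      Submodule.span ℂ (((Finset.range (n+1)).image (fun e => mo e (n - e))) : Set _) := by
  apply le_antisymm
  · intro p hp
    rw [mem_homogeneousSubmodule] at hp
    rw [← support_sum_monomial_coeff p]
    refine Submodule.sum_mem _ fun v hv => ?_
    have hdeg : v.degree = n := by
      by_contra h
      exact (MvPolynomial.mem_support_iff.mp hv) (hp.coeff_eq_zero h)
    have hv0 : v 0 ≤ n := by rw [degree_fin2] at hdeg; omega
    have hv1 : v 1 = n - v 0 := by rw [degree_fin2] at hdeg; omega
    have : monomial v (coeff v p) = coeff v p • mo (v 0) (n - v 0) := by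
      rw [smul_monomial, smul_eq_mul, mul_one]
      rw [← hv1]
      exact congrArg (fun w => monomial w (coeff v p)) (fin2_eq v)
    rw [this]
    refine Submodule.smul_mem _ _ (Submodule.subset_span ?_)
    simp only [Finset.coe_image, Set.mem_image, Finset.mem_coe, Finset.mem_range]
    exact ⟨v 0, by omega, rfl⟩
  · rw [Submodule.span_le]
    intro t ht
    simp only [Finset.coe_image, Set.mem_image, Finset.mem_coe, Finset.mem_range] at ht
    obtain ⟨e, he, rfl⟩ := ht
    rw [SetLike.mem_coe, mem_homogeneousSubmodule]
    exact isHomogeneous_monomial 1 (by rw [degree_single_add]; omega)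
lemma mo_eq_basis (p q : ℕ) :
    mo p q = basisMonomials (Fin 2) ℂ (Finsupp.single 0 p + Finsupp.single 1 q) := by
  rw [coe_basisMonomials]

lemma finrank_span_mo (E : Finset ℕ) (n : ℕ) :
    Module.finrank ℂ (Submodule.span ℂ
      ((E.image (fun e => mo e (n - e))) : Set (MvPolynomial (Fin 2) ℂ))) = E.card := by
  have hinj : Function.Injective
      (fun e : ℕ => Finsupp.single (0 : Fin 2) e + Finsupp.single 1 (n - e)) := by
    intro a b hab
    have := congrArg (fun f => f 0) hab
    simpa [Finsupp.single_apply] using this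
  have hli : LinearIndependent ℂ (fun e : E => mo (e : ℕ) (n - e)) := by
    have := (basisMonomials (Fin 2) ℂ).linearIndependent.comp
      (fun e : E => Finsupp.single (0 : Fin 2) (e : ℕ) + Finsupp.single 1 (n - e))
      (fun a b hab => Subtype.ext (hinj hab))
    exact this
  have hrange : ((E.image (fun e => mo e (n - e))) : Set (MvPolynomial (Fin 2) ℂ))
      = Set.range (fun e : E => mo (e : ℕ) (n - e)) := by
    rw [Finset.coe_image, Set.image_eq_range]; rfl
  rw [hrange, finrank_span_eq_card hli, Fintype.card_coe]
noncomputable abbrev Sgen (d : ℕ) : Set (MvPolynomial (Fin 2) ℂ) :=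
  {X 0 ^ d, X 1 ^ d, X 0 ^ (d - 1) * X 1}

lemma cd_aux (c d : ℕ) (hd : 1 ≤ d) : c * (d - 1) + c = c * d := by
  have h : d - 1 + 1 = d := by omega
  calc c * (d - 1) + c = c * (d - 1 + 1) := by ring
  _ = c * d := by rw [h]

lemma mem_Sgen_pow (d : ℕ) (hd : 1 ≤ d) (n : ℕ) {t : MvPolynomial (Fin 2) ℂ}
    (ht : t ∈ (Sgen d) ^ n) :
    ∃ a b c, a + b + c = n ∧ t = mo (a * d + c * (d - 1)) (b * d + c) := by
  induction n generalizing t with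
  | zero =>
    rw [pow_zero, Set.mem_one] at ht
    exact ⟨0, 0, 0, rfl, by simp [ht, mo]⟩
  | succ n ih =>
    rw [pow_succ, Set.mem_mul] at ht
    obtain ⟨x, hx, y, hy, rfl⟩ := ht
    obtain ⟨a, b, c, habc, rfl⟩ := ih hx
    rcases hy with rfl | rfl | rfl
    · refine ⟨a + 1, b, c, by omega, ?_⟩
      rw [X0_pow, mo_mul]
      congr 1 <;> ring
    · refine ⟨a, b + 1, c, by omega, ?_⟩
      rw [X1_pow, mo_mul]
      congr 1 <;> ring
    · refine ⟨a, b, c + 1, by omega, ?_⟩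
      rw [show (X 0 : MvPolynomial (Fin 2) ℂ) ^ (d-1) * X 1 = mo (d-1) 1 by
        rw [X0_pow, show (X 1 : MvPolynomial (Fin 2) ℂ) = mo 0 1 from by
          rw [← pow_one (X 1 : MvPolynomial (Fin 2) ℂ), X1_pow], mo_mul,
          Nat.add_zero, Nat.zero_add], mo_mul]
      congr 1 <;> ring
lemma mo_eq_pow (p q : ℕ) : mo p q = X 0 ^ p * X 1 ^ q := by
  rw [X0_pow, X1_pow, mo_mul, Nat.add_zero, Nat.zero_add]

open Classical in
noncomputable def Eset (d k : ℕ) : Finset ℕ :=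
  (Finset.range (d*k+1)).filter (fun e => ∃ a c, a + c ≤ k ∧ e = a*d + c*(d-1))

lemma mem_Eset {d k e : ℕ} :
    e ∈ Eset d k ↔ e ≤ d*k ∧ ∃ a c, a + c ≤ k ∧ e = a*d + c*(d-1) := by
  classical
  simp [Eset, Finset.mem_filter, Finset.mem_range, Nat.lt_succ_iff]

lemma deg_identity {d : ℕ} (hd : 1 ≤ d) (a b c k : ℕ) (habc : a + b + c = k) :
    a*d + c*(d-1) + (b*d + c) = d*k := by
  have h1 := cd_aux c d hd
  calc a*d + c*(d-1) + (b*d + c) = a*d + b*d + (c*(d-1) + c) := by ring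
  _ = a*d + b*d + c*d := by rw [h1]
  _ = d*k := by rw [← habc]; ring

lemma inf_eq_span (d k : ℕ) (hd : 1 ≤ d) :
    (Submodule.restrictScalars ℂ (((Ideal.span (Sgen d)) ^ k : Ideal (MvPolynomial (Fin 2) ℂ)) :
        Submodule (MvPolynomial (Fin 2) ℂ) (MvPolynomial (Fin 2) ℂ)))
      ⊓ homogeneousSubmodule (Fin 2) ℂ (d*k)
    = Submodule.span ℂ (((Eset d k).image (fun e => mo e (d*k - e))) : Set _) := by
  have hspan : ((Ideal.span (Sgen d)) ^ k : Ideal (MvPolynomial (Fin 2) ℂ))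
      = Ideal.span ((Sgen d) ^ k) := by
    rw [← Ideal.submodule_span_eq, ← Ideal.submodule_span_eq, Submodule.span_pow]
  have hT : ∀ t ∈ (Sgen d) ^ k, ∃ u : Fin 2 →₀ ℕ, u.degree = d*k ∧ t = monomial u 1 := by
    intro t ht
    obtain ⟨a, b, c, habc, rfl⟩ := mem_Sgen_pow d hd k ht
    exact ⟨_, by rw [degree_single_add]; exact deg_identity hd a b c k habc, rfl⟩
  apply le_antisymm
  · rintro p ⟨hpJ, hpV⟩
    have hhom : p ∈ homogeneousSubmodule (Fin 2) ℂ (d*k) := hpV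
    have hp2 : homogeneousComponent (d*k) p = p := by
      rw [homogeneousComponent_of_mem hhom, if_pos rfl]
    rw [← hp2]
    have hJ' : p ∈ Ideal.span ((Sgen d) ^ k) := by
      rw [← hspan]; exact hpJ
    refine Submodule.span_mono ?_ (hc_mem_span (d*k) _ hT hJ')
    intro t ht
    obtain ⟨a, b, c, habc, rfl⟩ := mem_Sgen_pow d hd k ht
    have hid := deg_identity hd a b c k habc
    simp only [Finset.coe_image, Set.mem_image, Finset.mem_coe]
    refine ⟨a*d + c*(d-1), mem_Eset.mpr ⟨by omega, a, c, by omega, rfl⟩, ?_⟩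
    have : d*k - (a*d + c*(d-1)) = b*d + c := by omega
    rw [this]
  · rw [Submodule.span_le]
    intro t ht
    simp only [Finset.coe_image, Set.mem_image, Finset.mem_coe] at ht
    obtain ⟨e, he, rfl⟩ := ht
    obtain ⟨hle, a, c, hac, rfl⟩ := mem_Eset.mp he
    set b := k - a - c with hb
    have habc : a + b + c = k := by omega
    have hid := deg_identity hd a b c k habc
    constructor
    · show mo _ _ ∈ ((Ideal.span (Sgen d)) ^ k : Ideal (MvPolynomial (Fin 2) ℂ))
      have heq : mo (a*d + c*(d-1)) (d*k - (a*d + c*(d-1)))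
          = (X 0 ^ d) ^ a * (X 1 ^ d) ^ b * (X 0 ^ (d-1) * X 1) ^ c := by
        have h2 : d*k - (a*d + c*(d-1)) = b*d + c := by omega
        rw [h2, mo_eq_pow]
        ring
      rw [heq, show k = a + b + c from habc.symm, pow_add, pow_add]
      refine Ideal.mul_mem_mul (Ideal.mul_mem_mul ?_ ?_) ?_ <;>
        refine Ideal.pow_mem_pow (Ideal.subset_span ?_) _
      · exact Set.mem_insert _ _
      · exact Set.mem_insert_of_mem _ (Set.mem_insert _ _)
      · exact Set.mem_insert_of_mem _ (Set.mem_insert_of_mem _ rfl)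
    · show _ ∈ homogeneousSubmodule (Fin 2) ℂ (d*k)
      rw [mem_homogeneousSubmodule]
      exact isHomogeneous_monomial 1 (by rw [degree_single_add]; omega)
open Classical in
noncomputable def Fset (d k : ℕ) : Finset ℕ :=
  (Finset.range (d*k+1)).filter (fun e => ¬ ∃ a c, a + c ≤ k ∧ e = a*d + c*(d-1))

noncomputable def Gset (d : ℕ) : Finset ℕ :=
  (Finset.range (d-2)).biUnion (fun s => (Finset.Icc 1 (d-2-s)).image (fun t => s*d + t))

lemma mem_Gset {d e : ℕ} :
    e ∈ Gset d ↔ ∃ s t, s < d - 2 ∧ 1 ≤ t ∧ t ≤ d - 2 - s ∧ e = s*d + t := by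
  simp only [Gset, Finset.mem_biUnion, Finset.mem_range, Finset.mem_image, Finset.mem_Icc]
  constructor
  · rintro ⟨s, hs, t, ⟨h1, h2⟩, rfl⟩; exact ⟨s, t, hs, h1, h2, rfl⟩
  · rintro ⟨s, t, hs, h1, h2, rfl⟩; exact ⟨s, hs, t, ⟨h1, h2⟩, rfl⟩

lemma Fset_eq_Gset (d k : ℕ) (hd : 3 ≤ d) (hk : d - 2 ≤ k) : Fset d k = Gset d := by
  classical
  ext e
  simp only [Fset, Finset.mem_filter, Finset.mem_range, Nat.lt_succ_iff, mem_Gset]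
  constructor
  · rintro ⟨hle, hnp⟩
    set s := e / d with hs
    set t := e % d with ht
    have hdm : d * s + t = e := Nat.div_add_mod e d
    have htd : t < d := Nat.mod_lt _ (by omega)
    have ht1 : 1 ≤ t := by
      by_contra h
      have ht0 : t = 0 := by omega
      apply hnp
      have hsk : s ≤ k := by
        have h1 : d * s ≤ d * k := by omega
        exact Nat.le_of_mul_le_mul_left h1 (by omega)
      exact ⟨s, 0, by omega, by rw [zero_mul, add_zero, Nat.mul_comm]; omega⟩
    have hts : t ≤ d - 2 - s := by
      by_contra h
      have hst : d - 1 ≤ s + t := by omega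
      apply hnp
      set c := d - t with hc
      have hc1 : 1 ≤ c := by omega
      have hcs : c ≤ s + 1 := by omega
      set a := s + 1 - c with ha
      have hac : a + c = s + 1 := by omega
      have hsk : s < k := by
        have h1 : d * s < d * k := by omega
        exact Nat.lt_of_mul_lt_mul_left h1
      refine ⟨a, c, by omega, ?_⟩
      have q1 : c*(d-1) + c = c*d := cd_aux c d (by omega)
      have q2 : a*d + c*d = (s+1)*d := by rw [← Nat.add_mul, hac]
      have q4 : (s+1)*d = s*d + d := by ring
      have q5 : s*d = d*s := Nat.mul_comm s d
      have hct : c + t = d := by omega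
      linarith [hdm]
    exact ⟨s, t, by omega, ht1, hts, by rw [Nat.mul_comm s d]; omega⟩
  · rintro ⟨s, t, hs, h1, h2, rfl⟩
    have hsd : (s+1)*d = s*d + d := by ring
    have hkd : (s+1)*d ≤ k*d := Nat.mul_le_mul_right d (by omega)
    have hdk : d*k = k*d := Nat.mul_comm d k
    have ht2 : t + s + 2 ≤ d := by omega
    constructor
    · linarith
    · rintro ⟨a, c, hac, heq⟩
      have l1 : (a+c)*(d-1) = a*(d-1) + c*(d-1) := by ring
      have l2 : a*(d-1) ≤ a*d := Nat.mul_le_mul_left a (by omega)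
      have l3 : c*(d-1) ≤ c*d := Nat.mul_le_mul_left c (by omega)
      have l4 : (a+c)*d = a*d + c*d := by ring
      rcases le_or_gt (a+c) s with hcase | hcase
      · have h5 : (a+c)*d ≤ s*d := Nat.mul_le_mul_right d hcase
        linarith
      · have h5 : (s+1)*(d-1) ≤ (a+c)*(d-1) := Nat.mul_le_mul_right (d-1) hcase
        have p1 : (s+1)*(d-1) + (s+1) = (s+1)*d := cd_aux (s+1) d (by omega)
        linarith
lemma card_Gset (d : ℕ) (hd : 3 ≤ d) : (Gset d).card = (d-1).choose 2 := by
  classical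
  rw [Gset, Finset.card_biUnion]
  · have hterm : ∀ s ∈ Finset.range (d-2),
        ((Finset.Icc 1 (d-2-s)).image (fun t => s*d + t)).card = d - 2 - s := by
      intro s _
      rw [Finset.card_image_of_injective _ (fun a b h => by omega), Nat.card_Icc]
      omega
    rw [Finset.sum_congr rfl hterm]
    set n := d - 2 with hn
    have hrefl : ∑ s ∈ Finset.range n, (n - s) = ∑ j ∈ Finset.range n, (j + 1) := by
      have := Finset.sum_range_reflect (fun j => n - j) n
      rw [← this]
      apply Finset.sum_congr rfl
      intro j hj
      rw [Finset.mem_range] at hj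
      omega
    rw [hrefl, Finset.sum_add_distrib, Finset.sum_const, Finset.card_range, smul_eq_mul, mul_one]
    have hgauss := Finset.sum_range_id_mul_two (n+1)
    rw [Finset.sum_range_succ] at hgauss
    have hd1 : d - 1 = n + 1 := by omega
    rw [hd1, Nat.choose_two_right]
    have h2 : (n+1) - 1 = n := by omega
    rw [h2]
    rw [h2] at hgauss
    omega
  · intro s1 h1 s2 h2 hne
    rw [Function.onFun, Finset.disjoint_left]
    intro e he1 he2
    simp only [Finset.mem_image, Finset.mem_Icc] at he1 he2
    obtain ⟨t1, ⟨ht1a, ht1b⟩, heq1⟩ := he1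
    obtain ⟨t2, ⟨ht2a, ht2b⟩, heq2⟩ := he2
    rw [Finset.mem_coe, Finset.mem_range] at h1 h2
    have key : ∀ a b ta tb : ℕ, a < b → 1 ≤ ta → ta ≤ d - 2 - a → 1 ≤ tb →
        a*d + ta ≠ b*d + tb := by
      intro a b ta tb hab hta htab htb
      have e1 : (a+1)*d = a*d + d := by ring
      have e2 : (a+1)*d ≤ b*d := Nat.mul_le_mul_right d (by omega)
      have e3 : ta + a + 2 ≤ d := by omega
      intro h
      linarith
    rcases lt_or_gt_of_ne hne with h | h
    · exact key s1 s2 t1 t2 h ht1a ht1b ht2a (by rw [heq1, heq2])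
    · exact key s2 s1 t2 t1 h ht2a ht2b ht1a (by rw [heq2, heq1])

lemma card_Eset (d k : ℕ) (hd : 3 ≤ d) (hk : d - 2 ≤ k) :
    (Eset d k).card + (d-1).choose 2 = d*k + 1 := by
  classical
  have := Finset.card_filter_add_card_filter_not
    (s := Finset.range (d*k+1))
    (p := fun e => ∃ a c, a + c ≤ k ∧ e = a*d + c*(d-1))
  rw [Finset.card_range] at this
  have hE : (Eset d k).card
      + ((Finset.range (d*k+1)).filter (fun e => ¬ ∃ a c, a + c ≤ k ∧ e = a*d + c*(d-1))).card
      = d*k + 1 := this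
  have hF : ((Finset.range (d*k+1)).filter
      (fun e => ¬ ∃ a c, a + c ≤ k ∧ e = a*d + c*(d-1))).card = (d-1).choose 2 := by
    have h1 : Fset d k = Gset d := Fset_eq_Gset d k hd hk
    have h2 := card_Gset d hd
    rw [← h1] at h2
    rw [← h2]
    rfl
  omega
/-- The Hilbert function of the graded quotient `ℂ[x_1,…,x_n]/J` at degree `i`. -/
noncomputable def hilbertFunction {n : ℕ} (J : Ideal (MvPolynomial (Fin n) ℂ)) (i : ℕ) : ℕ :=
  Module.finrank ℂ (Submodule.map (Ideal.Quotient.mkₐ ℂ J).toLinearMap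
    (homogeneousSubmodule (Fin n) ℂ i))

theorem stmt_14 (d k : ℕ) (hd : 3 ≤ d) (hk : d - 2 ≤ k) :
    hilbertFunction
      ((Ideal.span {(X 0 : MvPolynomial (Fin 2) ℂ) ^ d, (X 1 : MvPolynomial (Fin 2) ℂ) ^ d,
          (X 0 : MvPolynomial (Fin 2) ℂ) ^ (d - 1) * X 1}) ^ k) (d * k)
      = Nat.choose (d - 1) 2 := by
  classical
  set J : Ideal (MvPolynomial (Fin 2) ℂ) := (Ideal.span (Sgen d)) ^ k with hJ
  set V : Submodule ℂ (MvPolynomial (Fin 2) ℂ) := homogeneousSubmodule (Fin 2) ℂ (d*k) with hV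
  set q : MvPolynomial (Fin 2) ℂ →ₗ[ℂ] (MvPolynomial (Fin 2) ℂ ⧸ J) :=
    (Ideal.Quotient.mkₐ ℂ J).toLinearMap with hq
  have hVspan : V = Submodule.span ℂ
      (((Finset.range (d*k+1)).image (fun e => mo e (d*k - e))) : Set _) :=
    homogSubmodule_eq_span (d*k)
  haveI hfd : FiniteDimensional ℂ V := by rw [hVspan]; infer_instance
  have hker : LinearMap.ker q = Submodule.restrictScalars ℂ J := by
    ext x
    simp only [LinearMap.mem_ker, hq, AlgHom.toLinearMap_apply, Ideal.Quotient.mkₐ_eq_mk,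
      Submodule.restrictScalars_mem]
    exact Ideal.Quotient.eq_zero_iff_mem
  have hrank := LinearMap.finrank_range_add_finrank_ker (q ∘ₗ V.subtype)
  have hrange : LinearMap.range (q ∘ₗ V.subtype) = Submodule.map q V := by
    rw [LinearMap.range_comp, Submodule.range_subtype]
  have hker2 : LinearMap.ker (q ∘ₗ V.subtype)
      = Submodule.comap V.subtype (Submodule.restrictScalars ℂ J ⊓ V) := by
    rw [LinearMap.ker_comp, hker, Submodule.comap_inf, Submodule.comap_subtype_self, inf_top_eq]
  have hkerrank : Module.finrank ℂ (LinearMap.ker (q ∘ₗ V.subtype))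
      = Module.finrank ℂ (Submodule.restrictScalars ℂ J ⊓ V : Submodule ℂ _) := by
    rw [hker2]
    exact LinearEquiv.finrank_eq (Submodule.comapSubtypeEquivOfLe inf_le_right)
  have hinf : Module.finrank ℂ (Submodule.restrictScalars ℂ J ⊓ V : Submodule ℂ _)
      = (Eset d k).card := by
    rw [hJ, hV, inf_eq_span d k (by omega), finrank_span_mo]
  have hVrank : Module.finrank ℂ V = d*k + 1 := by
    rw [hVspan, finrank_span_mo, Finset.card_range]
  have hEcard := card_Eset d k hd hk
  have hhf : hilbertFunction J (d*k) = Module.finrank ℂ (Submodule.map q V) := rfl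
  show hilbertFunction J (d*k) = (d-1).choose 2
  rw [hhf, ← hrange]
  rw [hrange] at hrank
  rw [hkerrank, hinf, hVrank] at hrank
  rw [hrange]
  omega
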